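/- Let P and F be polynomial mappings in z = (z¹, …, zⁿ) ∈ ℂⁿ such that ‖P(z)‖² = ‖F(z)‖²·‖z‖² for all z ∈ ℂⁿ. Let κ denote the linear rank of F and r the linear rank of P. Then V_P = V_{F⊗z}; in particular r ≤ κ·n, and if moreover κ ≤ n, then n·κ − κ(κ−1)/2 ≤ r ≤ κ·n. (Grundmeier–Halfpap theorem: the SOS Conjecture in the case where the Hermitian multiplier is itself a sum of squares.) -/

import Mathlib

open scoped BigOperators

noncomputable section

open MvPolynomial

lemma coeff_sum_monomial' {σ : Type*} (K : MvPolynomial σ ℂ) (f : ℂ → ℝ) (hf : f 0 = 0) (d : σ →₀ ℕ) :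
    coeff d (∑ e ∈ K.support, monomial e (f (K.coeff e))) = f (K.coeff d) := by
  classical
  rw [MvPolynomial.coeff_sum]
  by_cases hd : d ∈ K.support
  · rw [Finset.sum_eq_single d]
    · simp [coeff_monomial]
    · intro b _ hbd; simp [coeff_monomial, hbd]
    · intro hcon; exact absurd hd hcon
  · rw [Finset.sum_eq_zero]
    · simp only [mem_support_iff, not_not] at hd; simp [hd, hf]
    · intro b hb
      have hbd : b ≠ d := by rintro rfl; exact hd hb
      simp [coeff_monomial, hbd]

/-- A polynomial over `ℂ` vanishing at all real points is zero. -/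
lemma eq_zero_of_real_points {σ : Type*} (K : MvPolynomial σ ℂ)
    (h : ∀ x : σ → ℝ, eval (fun s => (x s : ℂ)) K = 0) : K = 0 := by
  set R : MvPolynomial σ ℝ := ∑ d ∈ K.support, monomial d ((K.coeff d).re) with hR
  set I : MvPolynomial σ ℝ := ∑ d ∈ K.support, monomial d ((K.coeff d).im) with hI
  have coeffR : ∀ d, R.coeff d = (K.coeff d).re := fun d =>
    coeff_sum_monomial' K Complex.re rfl d
  have coeffI : ∀ d, I.coeff d = (K.coeff d).im := fun d =>
    coeff_sum_monomial' K Complex.im rfl d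
  have key : ∀ x : σ → ℝ, ((eval x R : ℝ) : ℂ) + Complex.I * ((eval x I : ℝ) : ℂ)
      = eval (fun s => (x s : ℂ)) K := by
    intro x
    rw [hR, hI, map_sum, map_sum, eval_eq (fun s => (x s : ℂ)) K]
    push_cast
    rw [Finset.mul_sum, ← Finset.sum_add_distrib]
    apply Finset.sum_congr rfl
    intro d _
    rw [eval_monomial, eval_monomial]
    push_cast
    have ht : ((d.prod fun n e => x n ^ e : ℝ) : ℂ) = ∏ i ∈ d.support, (↑(x i):ℂ) ^ d i := by
      rw [Finsupp.prod]; push_cast; rfl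
    rw [← ht]
    linear_combination ((d.prod fun n e => x n ^ e : ℝ) : ℂ) * (Complex.re_add_im (coeff d K))
  have hRz : R = 0 := by
    apply MvPolynomial.funext
    intro x
    have := key x
    rw [h x] at this
    have hre := congrArg Complex.re this
    simpa using hre
  have hIz : I = 0 := by
    apply MvPolynomial.funext
    intro x
    have := key x
    rw [h x] at this
    have him := congrArg Complex.im this
    simpa using him
  ext d
  have h1 : (K.coeff d).re = 0 := by rw [← coeffR, hRz]; simp
  have h2 : (K.coeff d).im = 0 := by rw [← coeffI, hIz]; simp
  simp [Complex.ext_iff, h1, h2]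

lemma eval_bind₁' {σ τ : Type*} (v : τ → ℂ) (u : σ → MvPolynomial τ ℂ) (K : MvPolynomial σ ℂ) :
    eval v (bind₁ u K) = eval (fun s => eval v (u s)) K :=
  eval₂Hom_bind₁ (RingHom.id ℂ) v u K

/-- A polynomial in `z`, `w` vanishing on the antidiagonal `w = conj z` is zero. -/
lemma eq_zero_of_antidiag {n : ℕ} (K : MvPolynomial (Fin n ⊕ Fin n) ℂ)
    (h : ∀ z : Fin n → ℂ,
      eval (Sum.elim z (fun j => (starRingEnd ℂ) (z j))) K = 0) : K = 0 := by
  set u : Fin n ⊕ Fin n → MvPolynomial (Fin n ⊕ Fin n) ℂ :=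
    Sum.elim (fun j => X (Sum.inl j) + C Complex.I * X (Sum.inr j))
             (fun j => X (Sum.inl j) - C Complex.I * X (Sum.inr j)) with hu
  set u' : Fin n ⊕ Fin n → MvPolynomial (Fin n ⊕ Fin n) ℂ :=
    Sum.elim (fun j => C (1/2 : ℂ) * (X (Sum.inl j) + X (Sum.inr j)))
             (fun j => C (1/(2*Complex.I) : ℂ) * (X (Sum.inl j) - X (Sum.inr j))) with hu'
  have hzero : bind₁ u K = 0 := by
    apply eq_zero_of_real_points
    intro x
    rw [eval_bind₁']
    set z : Fin n → ℂ := fun j => (x (Sum.inl j) : ℂ) + Complex.I * (x (Sum.inr j) : ℂ) with hz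
    have : (fun s => eval (fun s => (x s : ℂ)) (u s))
        = Sum.elim z (fun j => (starRingEnd ℂ) (z j)) := by
      funext s
      cases s with
      | inl j => simp [hu, hz]
      | inr j => simp [hu, hz, Complex.ext_iff]
    rw [this, h z]
  have hinv : ∀ s, bind₁ u' (u s) = X s := by
    intro s
    cases s with
    | inl j =>
      simp only [hu, hu', Sum.elim_inl, Sum.elim_inr, map_add, map_mul, map_sub,
        bind₁_X_right, bind₁_C_right]
      simp only [C_mul', smul_add, smul_sub, smul_smul]
      match_scalars <;> (field_simp; try ring)
    | inr j =>
      simp only [hu, hu', Sum.elim_inl, Sum.elim_inr, map_add, map_mul, map_sub,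
        bind₁_X_right, bind₁_C_right]
      simp only [C_mul', smul_add, smul_sub, smul_smul]
      match_scalars <;> (field_simp; try ring)
  have hKK : bind₁ u' (bind₁ u K) = K := by
    rw [bind₁_bind₁]
    have h2 : (fun s => bind₁ u' (u s)) = X := funext hinv
    rw [h2, bind₁_X_left]
    rfl
  rw [← hKK, hzero, map_zero]

/-- The span of the components of `P` equals the span of the "conjugate slices"
`w ↦ ∑ k, conj (P k (w)) • P k`. -/
lemma span_eq_span_slices {n : ℕ} {ι : Type*} [Fintype ι]
    (P : ι → MvPolynomial (Fin n) ℂ) :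
    Submodule.span ℂ (Set.range P) =
      Submodule.span ℂ (Set.range fun w : Fin n → ℂ =>
        ∑ k, (starRingEnd ℂ) (eval w (P k)) • P k) := by
  classical
  set E := EuclideanSpace ℂ ι
  set L : E →ₗ[ℂ] MvPolynomial (Fin n) ℂ :=
    { toFun := fun d => ∑ k, d k • P k
      map_add' := by
        intro a b
        rw [← Finset.sum_add_distrib]
        apply Finset.sum_congr rfl
        intro k _
        show (a k + b k) • P k = _
        rw [add_smul]
      map_smul' := by
        intro c a
        simp only [RingHom.id_apply]
        rw [Finset.smul_sum]
        apply Finset.sum_congr rfl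
        intro k _
        show (c * a k) • P k = c • a k • P k
        rw [smul_smul] } with hL
  have hLapp : ∀ d : E, L d = ∑ k, d k • P k := fun _ => rfl
  set v : (Fin n → ℂ) → E := fun w => (WithLp.toLp 2 (fun k => (starRingEnd ℂ) (eval w (P k))) : E) with hv
  have hrange : LinearMap.range L = Submodule.span ℂ (Set.range P) := by
    apply le_antisymm
    · rintro _ ⟨d, rfl⟩
      exact Submodule.sum_mem _ fun k _ =>
        Submodule.smul_mem _ _ (Submodule.subset_span ⟨k, rfl⟩)
    · rw [Submodule.span_le]
      rintro _ ⟨k, rfl⟩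
      refine ⟨EuclideanSpace.single k 1, ?_⟩
      rw [hLapp]
      rw [Finset.sum_eq_single k]
      · simp
      · intro b _ hbk; simp [EuclideanSpace.single_apply, hbk]
      · simp
  set W : Submodule ℂ E := Submodule.span ℂ (Set.range v) with hW
  have hinner : ∀ (w : Fin n → ℂ) (d : E), inner ℂ (v w) d = eval w (L d) := by
    intro w d
    rw [hLapp, map_sum, PiLp.inner_apply]
    apply Finset.sum_congr rfl
    intro k _
    simp [hv, smul_eq_mul]
  have horth : Wᗮ = LinearMap.ker L := by
    ext d
    constructor
    · intro hd
      rw [LinearMap.mem_ker]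
      apply MvPolynomial.funext (q := 0)
      intro w
      rw [map_zero, ← hinner]
      exact (Submodule.mem_orthogonal W d).mp hd _ (Submodule.subset_span ⟨w, rfl⟩)
    · intro hd
      rw [LinearMap.mem_ker] at hd
      rw [Submodule.mem_orthogonal]
      intro u hu
      induction hu using Submodule.span_induction with
      | mem x hx =>
        obtain ⟨w, rfl⟩ := hx
        rw [hinner, hd, map_zero]
      | zero => simp
      | add x y _ _ hx hy => rw [inner_add_left, hx, hy, add_zero]
      | smul c x _ hx => rw [inner_smul_left, hx, mul_zero]
  have hsup : W ⊔ Wᗮ = ⊤ := Submodule.sup_orthogonal_of_hasOrthogonalProjection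
  have hmap : Submodule.map L W = LinearMap.range L := by
    apply le_antisymm (LinearMap.map_le_range)
    intro x hx
    obtain ⟨d, rfl⟩ := hx
    have hd : d ∈ W ⊔ Wᗮ := by rw [hsup]; trivial
    obtain ⟨a, ha, b, hb, rfl⟩ := Submodule.mem_sup.mp hd
    rw [horth, LinearMap.mem_ker] at hb
    rw [map_add, hb, add_zero]
    exact Submodule.mem_map_of_mem ha
  have : Submodule.map L W =
      Submodule.span ℂ (Set.range fun w : Fin n → ℂ =>
        ∑ k, (starRingEnd ℂ) (eval w (P k)) • P k) := by
    rw [hW, Submodule.map_span, ← Set.range_comp]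
    congr 1
  rw [← hrange, ← hmap, this]

/-- The Hermitian lift of a family of polynomials. -/
def HH {n : ℕ} {ι : Type*} [Fintype ι] (P : ι → MvPolynomial (Fin n) ℂ) :
    MvPolynomial (Fin n ⊕ Fin n) ℂ :=
  ∑ k, (rename Sum.inl (P k)) *
    (rename Sum.inr (MvPolynomial.map (starRingEnd ℂ) (P k)))

lemma conj_eval {n : ℕ} (w : Fin n → ℂ) (p : MvPolynomial (Fin n) ℂ) :
    (starRingEnd ℂ) (eval w p)
      = eval (fun j => (starRingEnd ℂ) (w j)) (MvPolynomial.map (starRingEnd ℂ) p) := by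
  rw [eval_map]
  rw [show (eval w) p = eval₂ (RingHom.id ℂ) w p from rfl]
  rw [eval₂_comp_left (starRingEnd ℂ) (RingHom.id ℂ) w p]
  rfl

lemma eval_HH_diag {n : ℕ} {ι : Type*} [Fintype ι] (P : ι → MvPolynomial (Fin n) ℂ)
    (z : Fin n → ℂ) :
    eval (Sum.elim z (fun j => (starRingEnd ℂ) (z j))) (HH P)
      = ((∑ k, Complex.normSq (eval z (P k)) : ℝ) : ℂ) := by
  rw [HH, map_sum]
  push_cast
  apply Finset.sum_congr rfl
  intro k _
  rw [map_mul, eval_rename, eval_rename]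
  have h1 : (Sum.elim z fun j => (starRingEnd ℂ) (z j)) ∘ Sum.inl = z := rfl
  have h2 : (Sum.elim z fun j => (starRingEnd ℂ) (z j)) ∘ Sum.inr
      = fun j => (starRingEnd ℂ) (z j) := rfl
  rw [h1, h2, ← conj_eval, Complex.mul_conj]

lemma aeval_C_comp {n : ℕ} (c : Fin n → ℂ) (q : MvPolynomial (Fin n) ℂ) :
    aeval (fun j => (C (c j) : MvPolynomial (Fin n) ℂ)) q = C (eval c q) := by
  rw [aeval_def, algebraMap_eq]
  rw [show (eval c) q = eval₂ (RingHom.id ℂ) c q from rfl]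
  rw [eval₂_comp_left C (RingHom.id ℂ) c q]
  rfl

/-- substitution function for slices -/
def subw {n : ℕ} (w : Fin n → ℂ) : Fin n ⊕ Fin n → MvPolynomial (Fin n) ℂ :=
  Sum.elim X (fun j => C ((starRingEnd ℂ) (w j)))

lemma slice_HH {n : ℕ} {ι : Type*} [Fintype ι] (P : ι → MvPolynomial (Fin n) ℂ)
    (w : Fin n → ℂ) :
    aeval (subw w) (HH P) = ∑ k, (starRingEnd ℂ) (eval w (P k)) • P k := by
  rw [HH, map_sum]
  apply Finset.sum_congr rfl
  intro k _
  rw [map_mul, aeval_rename, aeval_rename]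
  have h1 : (subw w) ∘ Sum.inl = (X : Fin n → MvPolynomial (Fin n) ℂ) := rfl
  have h2 : (subw w) ∘ Sum.inr
      = fun j => (C ((starRingEnd ℂ) (w j)) : MvPolynomial (Fin n) ℂ) := rfl
  rw [h1, h2, aeval_X_left_apply, aeval_C_comp, ← conj_eval, mul_comm, C_mul']

/-- Equality of sums of squared moduli implies equality of spans. -/
lemma span_eq_span_of_sumsq {n : ℕ} {ι ι' : Type*} [Fintype ι] [Fintype ι']
    (P : ι → MvPolynomial (Fin n) ℂ) (Q : ι' → MvPolynomial (Fin n) ℂ)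
    (h : ∀ z : Fin n → ℂ,
      ∑ k, Complex.normSq (eval z (P k)) = ∑ l, Complex.normSq (eval z (Q l))) :
    Submodule.span ℂ (Set.range P) = Submodule.span ℂ (Set.range Q) := by
  have hHH : HH P = HH Q := by
    rw [← sub_eq_zero]
    apply eq_zero_of_antidiag
    intro z
    rw [map_sub, eval_HH_diag, eval_HH_diag, h z, sub_self]
  rw [span_eq_span_slices P, span_eq_span_slices Q]
  have hfun : (fun w : Fin n → ℂ => ∑ k, (starRingEnd ℂ) (eval w (P k)) • P k)
      = (fun w : Fin n → ℂ => ∑ l, (starRingEnd ℂ) (eval w (Q l)) • Q l) := by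
    funext w
    rw [← slice_HH, ← slice_HH, hHH]
  rw [hfun]

/-- Leading monomial degree in lex order, `⊥` for the zero polynomial. -/
def degL (p : MvPolynomial (Fin n) ℂ) : WithBot (Lex (Fin n →₀ ℕ)) :=
  p.support.sup (fun d => ((toLex d : Lex (Fin n →₀ ℕ)) : WithBot (Lex (Fin n →₀ ℕ))))

lemma le_degL {p : MvPolynomial (Fin n) ℂ} {d : Fin n →₀ ℕ} (h : coeff d p ≠ 0) :
    ((toLex d : Lex (Fin n →₀ ℕ)) : WithBot (Lex (Fin n →₀ ℕ))) ≤ degL p :=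
  Finset.le_sup (mem_support_iff.mpr h)

lemma degL_attained {p : MvPolynomial (Fin n) ℂ} (hp : p ≠ 0) :
    ∃ d : Fin n →₀ ℕ, coeff d p ≠ 0 ∧ degL p = toLex d := by
  obtain ⟨b, hb, hsup⟩ := Finset.exists_mem_eq_sup p.support
    (support_nonempty.mpr hp)
    (fun d => ((toLex d : Lex (Fin n →₀ ℕ)) : WithBot (Lex (Fin n →₀ ℕ))))
  exact ⟨b, mem_support_iff.mp hb, hsup⟩

lemma degL_ne_bot {p : MvPolynomial (Fin n) ℂ} (hp : p ≠ 0) : degL p ≠ ⊥ := by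
  obtain ⟨d, _, hd⟩ := degL_attained hp
  rw [hd]; exact WithBot.coe_ne_bot

lemma coeff_eq_zero_of_degL_lt {p : MvPolynomial (Fin n) ℂ} {d : Fin n →₀ ℕ}
    (h : degL p < ((toLex d : Lex (Fin n →₀ ℕ)) : WithBot (Lex (Fin n →₀ ℕ)))) :
    coeff d p = 0 := by
  by_contra hc
  exact absurd (le_degL hc) (not_le.mpr h)

lemma coeff_degL_ne_zero {p : MvPolynomial (Fin n) ℂ} {d : Fin n →₀ ℕ} (hp : p ≠ 0)
    (hd : degL p = toLex d) : coeff d p ≠ 0 := by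
  obtain ⟨d₀, hc, hd₀⟩ := degL_attained hp
  have : toLex d₀ = toLex d := WithBot.coe_injective (hd₀ ▸ hd)
  have : d₀ = d := toLex.injective this
  exact this ▸ hc

lemma toLex_add' (a b : Fin n →₀ ℕ) : toLex (a + b) = toLex a + toLex b := rfl

lemma degL_mul_X {p : MvPolynomial (Fin n) ℂ} (i : Fin n) {d : Fin n →₀ ℕ} (hp : p ≠ 0)
    (hd : degL p = toLex d) :
    degL (p * X i)
      = ((toLex (d + Finsupp.single i 1) : Lex (Fin n →₀ ℕ)) : WithBot (Lex (Fin n →₀ ℕ))) := by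
  apply le_antisymm
  · apply Finset.sup_le
    intro d' hd'
    rw [support_mul_X] at hd'
    obtain ⟨c, hc, rfl⟩ := Finset.mem_map.mp hd'
    have h1 : ((toLex c : Lex (Fin n →₀ ℕ)) : WithBot (Lex (Fin n →₀ ℕ))) ≤ degL p :=
      Finset.le_sup hc
    rw [hd] at h1
    have h2 : (toLex c : Lex (Fin n →₀ ℕ)) ≤ toLex d := WithBot.coe_le_coe.mp h1
    have h3 : toLex c + toLex (Finsupp.single i 1) ≤ toLex d + toLex (Finsupp.single i 1) :=
      add_le_add_left h2 _
    have : addRightEmbedding (Finsupp.single i 1) c = c + Finsupp.single i 1 := rfl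
    rw [this]
    exact_mod_cast h3
  · have hcoeff : coeff (d + Finsupp.single i 1) (p * X i) ≠ 0 := by
      rw [coeff_mul_X]
      exact coeff_degL_ne_zero hp hd
    exact le_degL hcoeff

/-- Polynomials with pairwise distinct leading monomials are linearly independent. -/
lemma linearIndependent_of_degL_injective {ι : Type*} [Fintype ι]
    (g : ι → MvPolynomial (Fin n) ℂ) (h0 : ∀ s, g s ≠ 0)
    (hinj : Function.Injective (fun s => degL (g s))) :
    LinearIndependent ℂ g := by
  rw [Fintype.linearIndependent_iff]
  intro c hc
  by_contra hcon
  push_neg at hcon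
  obtain ⟨s₁, hs₁⟩ := hcon
  set T : Finset ι := Finset.univ.filter (fun s => c s ≠ 0) with hT
  have hTne : T.Nonempty := ⟨s₁, by simp [hT, hs₁]⟩
  obtain ⟨s₀, hs₀T, hmax⟩ := Finset.exists_max_image T (fun s => degL (g s)) hTne
  have hcs₀ : c s₀ ≠ 0 := (Finset.mem_filter.mp hs₀T).2
  obtain ⟨d₀, hd₀c, hd₀⟩ := degL_attained (h0 s₀)
  have hzero := congrArg (coeff d₀) hc
  rw [coeff_zero] at hzero
  have hsum : coeff d₀ (∑ s, c s • g s) = ∑ s, c s * coeff d₀ (g s) := by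
    rw [coeff_sum]
    apply Finset.sum_congr rfl
    intro s _
    rw [coeff_smul]
    rfl
  rw [hsum] at hzero
  have : ∀ s ∈ Finset.univ, s ≠ s₀ → c s * coeff d₀ (g s) = 0 := by
    intro s _ hss₀
    by_cases hcs : c s = 0
    · rw [hcs, zero_mul]
    · have hsT : s ∈ T := Finset.mem_filter.mpr ⟨Finset.mem_univ s, hcs⟩
      have hle : degL (g s) ≤ degL (g s₀) := hmax s hsT
      have hne : degL (g s) ≠ degL (g s₀) := fun he => hss₀ (hinj he)
      have hlt : degL (g s) < degL (g s₀) := lt_of_le_of_ne hle hne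
      rw [hd₀] at hlt
      rw [coeff_eq_zero_of_degL_lt hlt, mul_zero]
  rw [Finset.sum_eq_single_of_mem s₀ (Finset.mem_univ s₀) this] at hzero
  exact hcs₀ (by
    rcases mul_eq_zero.mp hzero with h | h
    · exact h
    · exact absurd h hd₀c)

/-- In a `κ`-dimensional space of polynomials one can find `κ` elements with pairwise
distinct leading monomials. -/
lemma exists_distinct_degL (V : Submodule ℂ (MvPolynomial (Fin n) ℂ)) [Module.Finite ℂ V]
    {κ : ℕ} (hκ : κ = Module.finrank ℂ V) :
    ∃ g : Fin κ → MvPolynomial (Fin n) ℂ,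
      (∀ s, g s ∈ V) ∧ (∀ s, g s ≠ 0) ∧ Function.Injective (fun s => degL (g s)) := by
  classical
  set S : Set (WithBot (Lex (Fin n →₀ ℕ))) := degL '' {p | p ∈ V ∧ p ≠ 0} with hS
  have hex : ∀ a ∈ S, ∃ p, p ∈ V ∧ p ≠ 0 ∧ degL p = a := by
    rintro a ⟨p, ⟨hpV, hp0⟩, rfl⟩
    exact ⟨p, hpV, hp0, rfl⟩
  set u : WithBot (Lex (Fin n →₀ ℕ)) → MvPolynomial (Fin n) ℂ :=
    fun a => if h : a ∈ S then (hex a h).choose else 0 with hu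
  have huS : ∀ a ∈ S, u a ∈ V ∧ u a ≠ 0 ∧ degL (u a) = a := by
    intro a ha
    rw [hu]
    simp only [dif_pos ha]
    exact (hex a ha).choose_spec
  -- every element of V lies in the span of the chosen representatives
  have key : ∀ a : WithBot (Lex (Fin n →₀ ℕ)), ∀ p, p ∈ V → degL p = a →
      p ∈ Submodule.span ℂ (u '' S) := by
    intro a
    induction a using WellFoundedLT.induction with
    | _ a IH =>
      intro p hpV hdeg
      subst hdeg
      by_cases hp0 : p = 0
      · rw [hp0]; exact Submodule.zero_mem _
      · have ha : degL p ∈ S := ⟨p, ⟨hpV, hp0⟩, rfl⟩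
        obtain ⟨hqV, hq0, hqd⟩ := huS _ ha
        obtain ⟨d, hcd, hd⟩ := degL_attained hp0
        have hqcd : coeff d (u (degL p)) ≠ 0 := coeff_degL_ne_zero hq0 (hqd.trans hd)
        set c : ℂ := coeff d p / coeff d (u (degL p)) with hc
        set p' : MvPolynomial (Fin n) ℂ := p - c • u (degL p) with hp'
        have hp'V : p' ∈ V := sub_mem hpV (Submodule.smul_mem _ _ hqV)
        have hcoeffd : coeff d p' = 0 := by
          rw [hp', coeff_sub, coeff_smul, hc, smul_eq_mul, div_mul_cancel₀ _ hqcd, sub_self]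
        have hlt : degL p' < degL p := by
          rcases eq_or_ne p' 0 with h0 | h0
          · rw [degL, h0]
            simp only [support_zero, Finset.sup_empty]
            rw [hd]
            exact WithBot.bot_lt_coe _
          · obtain ⟨d', hc', hd'⟩ := degL_attained h0
            rw [hd', hd]
            have hled : ((toLex d' : Lex (Fin n →₀ ℕ)) : WithBot (Lex (Fin n →₀ ℕ)))
                ≤ (toLex d : Lex (Fin n →₀ ℕ)) := by
              have : coeff d' p ≠ 0 ∨ coeff d' (u (degL p)) ≠ 0 := by
                by_contra hcon
                push_neg at hcon
                apply hc'
                rw [hp', coeff_sub, coeff_smul, hcon.1, hcon.2, smul_eq_mul, mul_zero, sub_self]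
              rcases this with h | h
              · exact hd ▸ le_degL h
              · exact hd ▸ hqd ▸ le_degL h
            have hne : d' ≠ d := by
              rintro rfl
              exact hc' hcoeffd
            have : ((toLex d' : Lex (Fin n →₀ ℕ)) : WithBot (Lex (Fin n →₀ ℕ)))
                ≠ (toLex d : Lex (Fin n →₀ ℕ)) := by
              simp only [ne_eq, WithBot.coe_inj]
              exact fun h => hne (toLex.injective h)
            exact lt_of_le_of_ne hled this
        have hmem' : p' ∈ Submodule.span ℂ (u '' S) := IH _ hlt p' hp'V rfl
        have hqmem : u (degL p) ∈ Submodule.span ℂ (u '' S) :=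
          Submodule.subset_span ⟨degL p, ha, rfl⟩
        have : p = p' + c • u (degL p) := by rw [hp']; ring
        rw [this]
        exact Submodule.add_mem _ hmem' (Submodule.smul_mem _ _ hqmem)
  -- getting κ distinct values in S
  have hT : ∃ T : Finset (WithBot (Lex (Fin n →₀ ℕ))), ↑T ⊆ S ∧ T.card = κ := by
    by_cases hfin : S.Finite
    · have hle : κ ≤ hfin.toFinset.card := by
        set q : ↥(hfin.toFinset) → MvPolynomial (Fin n) ℂ := fun a => u ↑a with hq
        have hrange : Set.range q = u '' S := by
          apply Set.eq_of_subset_of_subset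
          · rintro _ ⟨a, rfl⟩
            exact ⟨↑a, hfin.mem_toFinset.mp a.2, rfl⟩
          · rintro _ ⟨a, ha, rfl⟩
            exact ⟨⟨a, hfin.mem_toFinset.mpr ha⟩, rfl⟩
        have hVle : V ≤ Submodule.span ℂ (Set.range q) := by
          intro p hp
          rw [hrange]
          exact key _ p hp rfl
        haveI : FiniteDimensional ℂ (Submodule.span ℂ (Set.range q)) :=
          FiniteDimensional.span_of_finite ℂ (Set.finite_range q)
        calc κ = Module.finrank ℂ V := hκ
          _ ≤ Module.finrank ℂ (Submodule.span ℂ (Set.range q)) := Submodule.finrank_mono hVle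
          _ ≤ (Set.range q).toFinset.card := finrank_span_le_card _
          _ ≤ hfin.toFinset.card := by
              rw [Set.toFinset_range]
              exact (Finset.card_image_le).trans (le_of_eq (by rw [Finset.card_univ, Fintype.card_coe]))
      obtain ⟨T, hTsub, hTcard⟩ := Finset.exists_subset_card_eq hle
      exact ⟨T, by intro a haT; rw [← hfin.coe_toFinset]; exact_mod_cast hTsub haT, hTcard⟩
    · obtain ⟨T, hTsub, hTcard⟩ := Set.Infinite.exists_subset_card_eq hfin κ
      exact ⟨T, hTsub, hTcard⟩
  obtain ⟨T, hTsub, hTcard⟩ := hT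
  set e : Fin κ ≃ ↥T := (Finset.equivFinOfCardEq hTcard).symm with he
  refine ⟨fun s => u ↑(e s), ?_, ?_, ?_⟩
  · intro s; exact (huS _ (hTsub (e s).2)).1
  · intro s; exact (huS _ (hTsub (e s).2)).2.1
  · intro s t hst
    simp only at hst
    rw [(huS _ (hTsub (e s).2)).2.2, (huS _ (hTsub (e t).2)).2.2] at hst
    exact e.injective (Subtype.ext hst)

lemma single_add_single_aux {i i' j j' : Fin n}
    (h : Finsupp.single i (1:ℕ) + Finsupp.single j' 1 = Finsupp.single i' 1 + Finsupp.single j 1) :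
    i = i' ∨ (i = j ∧ i' = j') := by
  classical
  by_cases hii : i = i'
  · exact Or.inl hii
  · right
    have hi := DFunLike.congr_fun h i
    have hi' := DFunLike.congr_fun h i'
    simp only [Finsupp.add_apply, Finsupp.single_apply] at hi hi'
    simp only [if_true] at hi hi'
    rw [if_neg (Ne.symm hii)] at hi
    rw [if_neg hii] at hi'
    constructor
    · by_cases hji : j = i
      · exact hji.symm
      · exfalso
        rw [if_neg hji] at hi
        by_cases hj'i : j' = i
        · rw [if_pos hj'i] at hi; omega
        · rw [if_neg hj'i] at hi; omega
    · by_cases hj'i' : j' = i'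
      · exact hj'i'.symm
      · exfalso
        rw [if_neg hj'i'] at hi'
        by_cases hji' : j = i'
        · rw [if_pos hji'] at hi'; omega
        · rw [if_neg hji'] at hi'; omega

/-- If elements of `span (range A)` multiplied by variables land appropriately. -/
lemma mul_X_span_le {ι ι' : Type*} (A : ι → MvPolynomial (Fin n) ℂ)
    (B : ι' → MvPolynomial (Fin n) ℂ)
    (hAB : ∀ j, A j ∈ Submodule.span ℂ (Set.range B)) :
    Submodule.span ℂ (Set.range fun si : ι × Fin n => A si.1 * X si.2) ≤
      Submodule.span ℂ (Set.range fun si : ι' × Fin n => B si.1 * X si.2) := by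
  rw [Submodule.span_le]
  rintro _ ⟨⟨j, i⟩, rfl⟩
  show A j * X i ∈ _
  have h1 : A j * X i = LinearMap.mulRight ℂ (X i) (A j) := rfl
  rw [h1]
  have h2 : LinearMap.mulRight ℂ (X i) (A j)
      ∈ Submodule.map (LinearMap.mulRight ℂ (X i)) (Submodule.span ℂ (Set.range B)) :=
    Submodule.mem_map_of_mem (hAB j)
  rw [Submodule.map_span] at h2
  refine Submodule.span_le.mpr ?_ h2
  rintro _ ⟨_, ⟨l, rfl⟩, rfl⟩
  exact Submodule.subset_span ⟨(l, i), rfl⟩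

lemma lower_bound {m κ : ℕ} (F : Fin m → MvPolynomial (Fin n) ℂ)
    (hκ : κ = Module.finrank ℂ (Submodule.span ℂ (Set.range F))) :
    n * κ - κ * (κ - 1) / 2 ≤
      Module.finrank ℂ (Submodule.span ℂ
        (Set.range fun ji : Fin m × Fin n => F ji.1 * X ji.2)) := by
  classical
  set V := Submodule.span ℂ (Set.range F) with hV
  haveI : Module.Finite ℂ V := FiniteDimensional.span_of_finite ℂ (Set.finite_range F)
  obtain ⟨g, hgV, hg0, hginj⟩ := exists_distinct_degL V hκ
  have hds : ∀ s, ∃ d, coeff d (g s) ≠ 0 ∧ degL (g s) = toLex d := fun s => degL_attained (hg0 s)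
  choose d hcd hd using hds
  have hdinj : Function.Injective d := by
    intro s t hst
    apply hginj
    simp only
    rw [hd s, hd t, hst]
  set e : Fin n → (Fin n →₀ ℕ) := fun i => Finsupp.single i 1 with he
  set N := Submodule.span ℂ (Set.range fun ji : Fin m × Fin n => F ji.1 * X ji.2) with hN
  haveI : Module.Finite ℂ N := FiniteDimensional.span_of_finite ℂ (Set.finite_range _)
  have hmulmem : ∀ p ∈ V, ∀ i, p * X i ∈ N := by
    intro p hp i
    have h1 : p * X i = LinearMap.mulRight ℂ (X i) p := rfl
    rw [h1]
    have h2 : LinearMap.mulRight ℂ (X i) p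
        ∈ Submodule.map (LinearMap.mulRight ℂ (X i)) V := Submodule.mem_map_of_mem hp
    rw [hV, Submodule.map_span] at h2
    refine Submodule.span_le.mpr ?_ h2
    rintro _ ⟨_, ⟨l, rfl⟩, rfl⟩
    exact Submodule.subset_span ⟨(l, i), rfl⟩
  -- key collision fact
  have hcollide : ∀ s t : Fin κ, ∀ i i' j j' : Fin n, t < s →
      d s + e i = d t + e j → d s + e i' = d t + e j' → i = i' := by
    intro s t i i' j j' hts h1 h2
    have hsum : d s + (e i + e j') = d s + (e i' + e j) := by
      have c1 : (d s + e i) + e j' = (d t + e j) + e j' := by rw [h1]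
      have c2 : (d s + e i') + e j = (d t + e j') + e j := by rw [h2]
      calc d s + (e i + e j') = (d s + e i) + e j' := by abel
        _ = (d t + e j) + e j' := c1
        _ = (d t + e j') + e j := by abel
        _ = (d s + e i') + e j := c2.symm
        _ = d s + (e i' + e j) := by abel
    have hee : e i + e j' = e i' + e j := add_left_cancel hsum
    rcases single_add_single_aux hee with h | ⟨hij, hij'⟩
    · exact h
    · exfalso
      rw [hij] at h1
      have : d s = d t := by
        have := h1
        rwa [add_right_cancel_iff] at this
      exact absurd (hdinj this) (ne_of_gt hts)
  set Bad : Fin κ → Finset (Fin n) :=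
    fun s => Finset.univ.filter (fun i => ∃ t, t < s ∧ ∃ j, d s + e i = d t + e j) with hBad
  have hBadcard : ∀ s, (Bad s).card ≤ (s : ℕ) := by
    intro s
    have hmem : ∀ i ∈ Bad s, ∃ t, t < s ∧ ∃ j, d s + e i = d t + e j :=
      fun i hi => (Finset.mem_filter.mp hi).2
    haveI : Nonempty (Fin κ) := ⟨s⟩
    choose! t ht j hj using hmem
    have : (Bad s).card ≤ (Finset.Iio s).card := by
      apply Finset.card_le_card_of_injOn t
      · intro i hi
        exact Finset.mem_Iio.mpr (ht i hi)
      · intro i hi i' hi' htt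
        exact hcollide s (t i) i i' (j i) (j i')
          (ht i hi) (hj i hi) (htt ▸ hj i' hi')
    simpa [Fin.card_Iio] using this
  set D' : Finset (Fin κ × Fin n) := Finset.univ.filter (fun si => si.2 ∉ Bad si.1) with hD'
  -- counting
  have hcount : n * κ - κ * (κ - 1) / 2 ≤ D'.card := by
    have h1 : (Finset.univ.filter (fun si : Fin κ × Fin n => si.2 ∈ Bad si.1)).card
        + D'.card = κ * n := by
      rw [hD', Finset.card_filter_add_card_filter_not]
      simp [Finset.card_univ]
    have h2 : (Finset.univ.filter (fun si : Fin κ × Fin n => si.2 ∈ Bad si.1)).card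
        = ∑ s : Fin κ, (Bad s).card := by
      rw [Finset.card_eq_sum_card_fiberwise
        (f := Prod.fst) (t := Finset.univ) (fun x _ => Finset.mem_univ _)]
      apply Finset.sum_congr rfl
      intro s _
      rw [show (Finset.univ.filter (fun si : Fin κ × Fin n => si.2 ∈ Bad si.1)).filter
          (fun x => x.1 = s) = (Bad s).image (fun i => (s, i)) from ?_]
      · rw [Finset.card_image_of_injective _ (fun a b hab => (Prod.mk.injEq _ _ _ _).mp hab |>.2)]
      · ext ⟨a, b⟩
        simp only [Finset.mem_filter, Finset.mem_univ, true_and, Finset.mem_image]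
        constructor
        · rintro ⟨hb, rfl⟩; exact ⟨b, hb, rfl⟩
        · rintro ⟨i, hi, heq⟩
          obtain ⟨rfl, rfl⟩ := Prod.mk.injEq _ _ _ _ |>.mp heq
          exact ⟨hi, rfl⟩
    have h3 : ∑ s : Fin κ, (Bad s).card ≤ κ * (κ - 1) / 2 := by
      calc ∑ s : Fin κ, (Bad s).card ≤ ∑ s : Fin κ, (s : ℕ) :=
            Finset.sum_le_sum (fun s _ => hBadcard s)
        _ = ∑ i ∈ Finset.range κ, i := Fin.sum_univ_eq_sum_range (fun i => i) κ
        _ = κ * (κ - 1) / 2 := Finset.sum_range_id κ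
    have hmulc : n * κ = κ * n := Nat.mul_comm n κ
    omega
  -- linear independence
  have hlin : LinearIndependent ℂ
      (fun x : ↥D' => (⟨g (x : Fin κ × Fin n).1 * X (x : Fin κ × Fin n).2,
        hmulmem _ (hgV _) _⟩ : N)) := by
    apply LinearIndependent.of_comp N.subtype
    have hcomp : (N.subtype ∘ fun x : ↥D' => (⟨g (x : Fin κ × Fin n).1 * X (x : Fin κ × Fin n).2,
        hmulmem _ (hgV _) _⟩ : N)) = fun x : ↥D' => g (x : Fin κ × Fin n).1 * X (x : Fin κ × Fin n).2 := rfl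
    rw [hcomp]
    apply linearIndependent_of_degL_injective
    · intro s
      exact mul_ne_zero (hg0 _) (X_ne_zero _)
    · intro x y hxy
      simp only at hxy
      rw [degL_mul_X _ (hg0 _) (hd _), degL_mul_X _ (hg0 _) (hd _)] at hxy
      have hxy2 : d (x : Fin κ × Fin n).1 + e (x : Fin κ × Fin n).2
          = d (y : Fin κ × Fin n).1 + e (y : Fin κ × Fin n).2 :=
        toLex.injective (WithBot.coe_injective hxy)
      rcases lt_trichotomy (x : Fin κ × Fin n).1 (y : Fin κ × Fin n).1 with hlt | heq | hgt
      · exfalso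
        have hyBad : (y : Fin κ × Fin n).2 ∈ Bad (y : Fin κ × Fin n).1 := by
          rw [hBad]
          simp only [Finset.mem_filter, Finset.mem_univ, true_and]
          exact ⟨(x : Fin κ × Fin n).1, hlt, (x : Fin κ × Fin n).2, hxy2.symm⟩
        have := (Finset.mem_filter.mp y.2).2
        exact this hyBad
      · have hi : e (x : Fin κ × Fin n).2 = e (y : Fin κ × Fin n).2 := by
          rw [heq] at hxy2
          exact add_left_cancel hxy2
        have : (x : Fin κ × Fin n).2 = (y : Fin κ × Fin n).2 :=
          Finsupp.single_left_injective one_ne_zero hi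
        exact Subtype.ext (Prod.ext heq this)
      · exfalso
        have hxBad : (x : Fin κ × Fin n).2 ∈ Bad (x : Fin κ × Fin n).1 := by
          rw [hBad]
          simp only [Finset.mem_filter, Finset.mem_univ, true_and]
          exact ⟨(y : Fin κ × Fin n).1, hgt, (y : Fin κ × Fin n).2, hxy2⟩
        have := (Finset.mem_filter.mp x.2).2
        exact this hxBad
  have hfinal : D'.card ≤ Module.finrank ℂ N := by
    have := hlin.fintype_card_le_finrank
    rwa [Fintype.card_coe] at this
  exact hcount.trans hfinal

lemma upper_bound {m κ : ℕ} (F : Fin m → MvPolynomial (Fin n) ℂ)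
    (hκ : κ = Module.finrank ℂ (Submodule.span ℂ (Set.range F))) :
    Module.finrank ℂ (Submodule.span ℂ
      (Set.range fun ji : Fin m × Fin n => F ji.1 * X ji.2)) ≤ κ * n := by
  classical
  set V := Submodule.span ℂ (Set.range F) with hV
  haveI : Module.Finite ℂ V := FiniteDimensional.span_of_finite ℂ (Set.finite_range F)
  set b := Module.finBasis ℂ V with hb
  set c : Fin (Module.finrank ℂ V) → MvPolynomial (Fin n) ℂ := fun s => ((b s : V) : _) with hc
  have hsp : Submodule.span ℂ (Set.range c) = V := by
    have h1 := b.span_eq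
    have h2 : Set.range c = V.subtype '' Set.range b := by
      rw [← Set.range_comp]; rfl
    rw [h2, ← Submodule.map_span, h1, Submodule.map_subtype_top]
  have hVc : ∀ j, F j ∈ Submodule.span ℂ (Set.range c) := by
    intro j
    rw [hsp]
    exact Submodule.subset_span ⟨j, rfl⟩
  have le1 := mul_X_span_le F c hVc
  haveI : Module.Finite ℂ (Submodule.span ℂ
      (Set.range fun si : Fin (Module.finrank ℂ V) × Fin n => c si.1 * X si.2)) :=
    FiniteDimensional.span_of_finite ℂ (Set.finite_range _)
  calc Module.finrank ℂ (Submodule.span ℂ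
        (Set.range fun ji : Fin m × Fin n => F ji.1 * X ji.2))
      ≤ Module.finrank ℂ (Submodule.span ℂ
        (Set.range fun si : Fin (Module.finrank ℂ V) × Fin n => c si.1 * X si.2)) :=
        Submodule.finrank_mono le1
    _ ≤ (Set.range fun si : Fin (Module.finrank ℂ V) × Fin n => c si.1 * X si.2).toFinset.card :=
        finrank_span_le_card _
    _ ≤ κ * n := by
        rw [Set.toFinset_range]
        apply le_trans Finset.card_image_le
        rw [Finset.card_univ]
        simp [hκ]

/-- **Grundmeier–Halfpap theorem** (the SOS Conjecture when the Hermitian multiplier is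
itself a sum of squares).  Let `P` and `F` be polynomial mappings on `ℂⁿ` with
`‖P(z)‖² = ‖F(z)‖²·‖z‖²` for all `z ∈ ℂⁿ`.  Let `κ` be the linear rank of `F` and `r` the
linear rank of `P`.  Then `V_P = V_{F⊗z}`; in particular `r ≤ κ·n`, and if moreover
`κ ≤ n`, then `n·κ − κ(κ−1)/2 ≤ r ≤ κ·n`. -/
theorem grundmeier_halfpap {n pP m : ℕ}
    (P : Fin pP → MvPolynomial (Fin n) ℂ) (F : Fin m → MvPolynomial (Fin n) ℂ)
    (h : ∀ z : Fin n → ℂ,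
      ∑ k, Complex.normSq (MvPolynomial.eval z (P k)) =
        (∑ j, Complex.normSq (MvPolynomial.eval z (F j))) * ∑ i, Complex.normSq (z i))
    (κ r : ℕ)
    (hκ : κ = Module.finrank ℂ (Submodule.span ℂ (Set.range F)))
    (hr : r = Module.finrank ℂ (Submodule.span ℂ (Set.range P))) :
    Submodule.span ℂ (Set.range P) =
      Submodule.span ℂ
        (Set.range fun ji : Fin m × Fin n => F ji.1 * MvPolynomial.X ji.2) ∧
    r ≤ κ * n ∧
    (κ ≤ n → n * κ - κ * (κ - 1) / 2 ≤ r ∧ r ≤ κ * n) := by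
  have hQ : ∀ z : Fin n → ℂ,
      ∑ k, Complex.normSq (eval z (P k)) =
        ∑ ji : Fin m × Fin n, Complex.normSq (eval z (F ji.1 * X ji.2)) := by
    intro z
    rw [h z, Fintype.sum_prod_type, Finset.sum_mul_sum]
    apply Finset.sum_congr rfl
    intro j _
    apply Finset.sum_congr rfl
    intro i _
    rw [map_mul, Complex.normSq_mul, eval_X]
  have hspan := span_eq_span_of_sumsq P (fun ji : Fin m × Fin n => F ji.1 * X ji.2) hQ
  have hub : r ≤ κ * n := by
    rw [hr, hspan]
    exact upper_bound F hκ
  refine ⟨hspan, hub, fun _ => ⟨?_, hub⟩⟩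
  rw [hr, hspan]
  exact lower_bound F hκ
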